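/- Let n₁ ≤ n₂ be positive integers, let M ⊂ {0,1}^{n₁n₂} be the (finite, nonempty) set of assignment vectors, let F be a symmetric fourth-order tensor on ℝ^{n₁n₂} with Frobenius norm ‖F‖₂, let α ≥ 3‖F‖₂, and define F⁴_α(x,y,z,t) = F⁴(x,y,z,t) + α·(⟨x,y⟩⟨z,t⟩ + ⟨x,z⟩⟨y,t⟩ + ⟨x,t⟩⟨y,z⟩)/3. Then max_{x,y,z,t ∈ M} F⁴_α(x,y,z,t) = max_{x ∈ M} F⁴_α(x,x,x,x) = max_{x ∈ M} (S⁴(x) + α n₁²). -/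

import Mathlib

/-- A fourth-order tensor is symmetric if its entries are invariant under any
permutation of the indices. -/
def Sym4 {ι : Type*} (F : ι → ι → ι → ι → ℝ) : Prop :=
  ∀ (σ : Equiv.Perm (Fin 4)) (v : Fin 4 → ι),
    F (v (σ 0)) (v (σ 1)) (v (σ 2)) (v (σ 3)) = F (v 0) (v 1) (v 2) (v 3)

/-- The multilinear form associated to a fourth-order tensor. -/
def mform4 {ι : Type*} [Fintype ι] (F : ι → ι → ι → ι → ℝ)
    (x y z t : EuclideanSpace ℝ ι) : ℝ :=
  ∑ i, ∑ j, ∑ k, ∑ l, F i j k l * x i * y j * z k * t l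

/-- The Frobenius norm `‖F‖₂` of a fourth-order tensor. -/
noncomputable def frobNorm4 {ι : Type*} [Fintype ι] (F : ι → ι → ι → ι → ℝ) : ℝ :=
  Real.sqrt (∑ i, ∑ j, ∑ k, ∑ l, (F i j k l) ^ 2)

/-- The modified multilinear form
`F⁴_α(x,y,z,t) = F⁴(x,y,z,t) + α (⟨x,y⟩⟨z,t⟩ + ⟨x,z⟩⟨y,t⟩ + ⟨x,t⟩⟨y,z⟩)/3`. -/
noncomputable def mform4α {ι : Type*} [Fintype ι] (F : ι → ι → ι → ι → ℝ) (α : ℝ)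
    (x y z t : EuclideanSpace ℝ ι) : ℝ :=
  mform4 F x y z t +
    α * ((inner ℝ x y : ℝ) * (inner ℝ z t : ℝ) + (inner ℝ x z : ℝ) * (inner ℝ y t : ℝ) +
        (inner ℝ x t : ℝ) * (inner ℝ y z : ℝ)) / 3

/-- The set of one-to-one assignment matrices, viewed as 0/1 vectors indexed by
`Fin n₁ × Fin n₂`: each row sums to 1 and each column sums to at most 1. -/
def AssignSet (n₁ n₂ : ℕ) : Set (EuclideanSpace ℝ (Fin n₁ × Fin n₂)) :=
  {x | (∀ p, x p = 0 ∨ x p = 1) ∧ (∀ i, ∑ j, x (i, j) = 1) ∧ (∀ j, ∑ i, x (i, j) ≤ 1)}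

section helpers
variable {ι : Type*} [Fintype ι]

lemma mform4_add1 (F : ι → ι → ι → ι → ℝ) (a a' b c d : EuclideanSpace ℝ ι) :
    mform4 F (a + a') b c d = mform4 F a b c d + mform4 F a' b c d := by
  simp only [mform4, PiLp.add_apply, mul_add, add_mul, Finset.sum_add_distrib]

lemma mform4_add2 (F : ι → ι → ι → ι → ℝ) (a b b' c d : EuclideanSpace ℝ ι) :
    mform4 F a (b + b') c d = mform4 F a b c d + mform4 F a b' c d := by
  simp only [mform4, PiLp.add_apply, mul_add, add_mul, Finset.sum_add_distrib]

lemma mform4_add3 (F : ι → ι → ι → ι → ℝ) (a b c c' d : EuclideanSpace ℝ ι) :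
    mform4 F a b (c + c') d = mform4 F a b c d + mform4 F a b c' d := by
  simp only [mform4, PiLp.add_apply, mul_add, add_mul, Finset.sum_add_distrib]

lemma mform4_add4 (F : ι → ι → ι → ι → ℝ) (a b c d d' : EuclideanSpace ℝ ι) :
    mform4 F a b c (d + d') = mform4 F a b c d + mform4 F a b c d' := by
  simp only [mform4, PiLp.add_apply, mul_add, add_mul, Finset.sum_add_distrib]

lemma mform4_neg1 (F : ι → ι → ι → ι → ℝ) (a b c d : EuclideanSpace ℝ ι) :
    mform4 F (-a) b c d = - mform4 F a b c d := by
  simp only [mform4, PiLp.neg_apply, mul_neg, neg_mul, Finset.sum_neg_distrib]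

lemma mform4_neg3 (F : ι → ι → ι → ι → ℝ) (a b c d : EuclideanSpace ℝ ι) :
    mform4 F a b (-c) d = - mform4 F a b c d := by
  simp only [mform4, PiLp.neg_apply, mul_neg, neg_mul, Finset.sum_neg_distrib]

lemma mform4_neg4 (F : ι → ι → ι → ι → ℝ) (a b c d : EuclideanSpace ℝ ι) :
    mform4 F a b c (-d) = - mform4 F a b c d := by
  simp only [mform4, PiLp.neg_apply, mul_neg, neg_mul, Finset.sum_neg_distrib]

end helpers

section sym
variable {ι : Type*} [Fintype ι] {F : ι → ι → ι → ι → ℝ}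

lemma sym4_12 (hF : Sym4 F) (i j k l : ι) : F j i k l = F i j k l := by
  have h := hF (Equiv.swap 0 1) ![i, j, k, l]
  simpa [Equiv.swap_apply_def, Fin.isValue] using h

lemma sym4_23 (hF : Sym4 F) (i j k l : ι) : F i k j l = F i j k l := by
  have h := hF (Equiv.swap 1 2) ![i, j, k, l]
  simpa [Equiv.swap_apply_def, Fin.isValue] using h

lemma sym4_34 (hF : Sym4 F) (i j k l : ι) : F i j l k = F i j k l := by
  have h := hF (Equiv.swap 2 3) ![i, j, k, l]
  simpa [Equiv.swap_apply_def, Fin.isValue] using h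

end sym

section msym
variable {ι : Type*} [Fintype ι] {F : ι → ι → ι → ι → ℝ}

lemma ms12 (hF : Sym4 F) (a b c d : EuclideanSpace ℝ ι) :
    mform4 F b a c d = mform4 F a b c d := by
  unfold mform4
  rw [Finset.sum_comm]
  refine Finset.sum_congr rfl fun i _ => ?_
  refine Finset.sum_congr rfl fun j _ => ?_
  refine Finset.sum_congr rfl fun k _ => ?_
  refine Finset.sum_congr rfl fun l _ => ?_
  rw [sym4_12 hF]; ring

lemma ms34 (hF : Sym4 F) (a b c d : EuclideanSpace ℝ ι) :
    mform4 F a b d c = mform4 F a b c d := by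
  unfold mform4
  refine Finset.sum_congr rfl fun i _ => ?_
  refine Finset.sum_congr rfl fun j _ => ?_
  rw [Finset.sum_comm]
  refine Finset.sum_congr rfl fun k _ => ?_
  refine Finset.sum_congr rfl fun l _ => ?_
  rw [sym4_34 hF]; ring

lemma ms23 (hF : Sym4 F) (a b c d : EuclideanSpace ℝ ι) :
    mform4 F a c b d = mform4 F a b c d := by
  unfold mform4
  refine Finset.sum_congr rfl fun i _ => ?_
  rw [Finset.sum_comm]
  refine Finset.sum_congr rfl fun j _ => ?_
  refine Finset.sum_congr rfl fun k _ => ?_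
  refine Finset.sum_congr rfl fun l _ => ?_
  rw [sym4_23 hF]; ring

end msym

section cs
variable {ι : Type*} [Fintype ι]

lemma prodSqStep {β γ : Type*} [Fintype β] [Fintype γ] (u : β → ℝ) (v : γ → ℝ) :
    ∑ p : β × γ, (u p.1 * v p.2) ^ 2 = (∑ x, u x ^ 2) * (∑ y, v y ^ 2) := by
  rw [Finset.sum_mul_sum, Fintype.sum_prod_type]
  exact Finset.sum_congr rfl fun x _ => Finset.sum_congr rfl fun y _ => by ring

lemma mform4_sq_le (F : ι → ι → ι → ι → ℝ) (a b c d : EuclideanSpace ℝ ι) :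
    (mform4 F a b c d) ^ 2 ≤ (∑ i, ∑ j, ∑ k, ∑ l, F i j k l ^ 2) *
      ((∑ i, a i ^ 2) * ((∑ i, b i ^ 2) * ((∑ i, c i ^ 2) * (∑ i, d i ^ 2)))) := by
  have h := Finset.sum_mul_sq_le_sq_mul_sq (Finset.univ : Finset (ι × ι × ι × ι))
    (fun p => F p.1 p.2.1 p.2.2.1 p.2.2.2)
    (fun p => a p.1 * b p.2.1 * c p.2.2.1 * d p.2.2.2)
  have e1 : (∑ p : ι × ι × ι × ι,
      (fun p : ι × ι × ι × ι => F p.1 p.2.1 p.2.2.1 p.2.2.2) p *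
      (fun p : ι × ι × ι × ι => a p.1 * b p.2.1 * c p.2.2.1 * d p.2.2.2) p)
      = mform4 F a b c d := by
    rw [mform4]
    rw [Fintype.sum_prod_type]
    refine Finset.sum_congr rfl fun i _ => ?_
    rw [Fintype.sum_prod_type]
    refine Finset.sum_congr rfl fun j _ => ?_
    rw [Fintype.sum_prod_type]
    refine Finset.sum_congr rfl fun k _ => ?_
    refine Finset.sum_congr rfl fun l _ => ?_
    ring
  have e2 : (∑ p : ι × ι × ι × ι,
      ((fun p : ι × ι × ι × ι => F p.1 p.2.1 p.2.2.1 p.2.2.2) p) ^ 2)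
      = ∑ i, ∑ j, ∑ k, ∑ l, F i j k l ^ 2 := by
    rw [Fintype.sum_prod_type]
    refine Finset.sum_congr rfl fun i _ => ?_
    rw [Fintype.sum_prod_type]
    refine Finset.sum_congr rfl fun j _ => ?_
    rw [Fintype.sum_prod_type]
  have e3 : (∑ p : ι × ι × ι × ι,
      ((fun p : ι × ι × ι × ι => a p.1 * b p.2.1 * c p.2.2.1 * d p.2.2.2) p) ^ 2)
      = (∑ i, a i ^ 2) * ((∑ i, b i ^ 2) * ((∑ i, c i ^ 2) * (∑ i, d i ^ 2))) := by
    calc (∑ p : ι × ι × ι × ι,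
        ((fun p : ι × ι × ι × ι => a p.1 * b p.2.1 * c p.2.2.1 * d p.2.2.2) p) ^ 2)
        = ∑ p : ι × ι × ι × ι,
          (a p.1 * (b p.2.1 * (c p.2.2.1 * d p.2.2.2))) ^ 2 :=
          Finset.sum_congr rfl fun p _ => by ring
      _ = (∑ i, a i ^ 2) * (∑ q : ι × ι × ι, (b q.1 * (c q.2.1 * d q.2.2)) ^ 2) :=
          prodSqStep (β := ι) (γ := ι × ι × ι) a (fun q => b q.1 * (c q.2.1 * d q.2.2))
      _ = (∑ i, a i ^ 2) * ((∑ i, b i ^ 2) * (∑ r : ι × ι, (c r.1 * d r.2) ^ 2)) := by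
          rw [prodSqStep (β := ι) (γ := ι × ι) b (fun r => c r.1 * d r.2)]
      _ = (∑ i, a i ^ 2) * ((∑ i, b i ^ 2) * ((∑ i, c i ^ 2) * (∑ i, d i ^ 2))) := by
          rw [prodSqStep (β := ι) (γ := ι) c d]
  rw [e1, e2, e3] at h
  exact h

end cs

section more
variable {ι : Type*} [Fintype ι]

lemma mform4_neg2 (F : ι → ι → ι → ι → ℝ) (a b c d : EuclideanSpace ℝ ι) :
    mform4 F a (-b) c d = - mform4 F a b c d := by
  simp only [mform4, PiLp.neg_apply, mul_neg, neg_mul, Finset.sum_neg_distrib]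

lemma inner_euc (a b : EuclideanSpace ℝ ι) : (inner ℝ a b : ℝ) = ∑ i, a i * b i := by
  simp [PiLp.inner_apply, RCLike.inner_apply, conj_trivial, mul_comm]

lemma inner_euc_sq (a : EuclideanSpace ℝ ι) : (inner ℝ a a : ℝ) = ∑ i, a i ^ 2 := by
  rw [inner_euc]; exact Finset.sum_congr rfl fun i _ => (sq (a i)).symm

lemma mform4α_diag_nonneg (F : ι → ι → ι → ι → ℝ) (α : ℝ) (hα : 3 * frobNorm4 F ≤ α)
    (u v : EuclideanSpace ℝ ι) : 0 ≤ mform4α F α u u v v := by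
  have hN0 : 0 ≤ frobNorm4 F := Real.sqrt_nonneg _
  have hα0 : 0 ≤ α := le_trans (by linarith) hα
  have hN2 : frobNorm4 F ^ 2 = ∑ i, ∑ j, ∑ k, ∑ l, F i j k l ^ 2 :=
    Real.sq_sqrt (by positivity)
  set A := (inner ℝ u u : ℝ) with hAdef
  set C := (inner ℝ v v : ℝ) with hCdef
  set B := (inner ℝ u v : ℝ) with hBdef
  have hA0 : 0 ≤ A := real_inner_self_nonneg
  have hC0 : 0 ≤ C := real_inner_self_nonneg
  have hcs := mform4_sq_le F u u v v
  rw [← hN2, ← inner_euc_sq, ← inner_euc_sq, ← hAdef, ← hCdef] at hcs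
  have key : (mform4 F u u v v) ^ 2 ≤ (frobNorm4 F * (A * C)) ^ 2 := by
    calc (mform4 F u u v v) ^ 2 ≤ frobNorm4 F ^ 2 * (A * (A * (C * C))) := hcs
      _ = (frobNorm4 F * (A * C)) ^ 2 := by ring
  have habs : -(frobNorm4 F * (A * C)) ≤ mform4 F u u v v := by
    have h1 : |mform4 F u u v v| ≤ frobNorm4 F * (A * C) := by
      rw [← Real.sqrt_sq_eq_abs]
      calc Real.sqrt ((mform4 F u u v v) ^ 2) ≤
          Real.sqrt ((frobNorm4 F * (A * C)) ^ 2) := Real.sqrt_le_sqrt key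
        _ = frobNorm4 F * (A * C) := Real.sqrt_sq (by positivity)
    linarith [neg_abs_le (mform4 F u u v v)]
  show 0 ≤ mform4 F u u v v + α * (A * C + B * B + B * B) / 3
  nlinarith [mul_nonneg (sub_nonneg.2 hα) (mul_nonneg hA0 hC0),
    mul_nonneg hα0 (mul_self_nonneg B)]

end more

section ident
variable {ι : Type*} [Fintype ι] {F : ι → ι → ι → ι → ℝ}

lemma ident2 (hF : Sym4 F) (α : ℝ) (u v : EuclideanSpace ℝ ι) :
    mform4α F α (u + v) (u + v) (u - v) (u - v) =
      mform4α F α u u u u + mform4α F α v v v v - 2 * mform4α F α u u v v := by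
  have c1 : mform4 F u u v u = mform4 F u u u v := ms34 hF u u u v
  have c2 : mform4 F u v u u = mform4 F u u u v := by rw [ms23 hF u u v u, c1]
  have c3 : mform4 F v u u u = mform4 F u u u v := by rw [ms12 hF u v u u, c2]
  have c4 : mform4 F u v u v = mform4 F u u v v := ms23 hF u u v v
  have c6 : mform4 F u v v u = mform4 F u u v v := by rw [ms34 hF u v u v, c4]
  have c5 : mform4 F v u u v = mform4 F u u v v := by rw [ms12 hF u v u v, c4]
  have c7 : mform4 F v u v u = mform4 F u u v v := by rw [ms12 hF u v v u, c6]
  have c8 : mform4 F v v u u = mform4 F u u v v := by rw [ms23 hF v u v u, c7]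
  have d1 : mform4 F v u v v = mform4 F u v v v := ms12 hF u v v v
  have d2 : mform4 F v v u v = mform4 F u v v v := by rw [ms23 hF v u v v, d1]
  have d3 : mform4 F v v v u = mform4 F u v v v := by rw [ms34 hF v v u v, d2]
  unfold mform4α
  simp only [sub_eq_add_neg, mform4_add1, mform4_add2, mform4_add3, mform4_add4,
    mform4_neg1, mform4_neg2, mform4_neg3, mform4_neg4,
    inner_add_left, inner_add_right, inner_neg_left, inner_neg_right]
  rw [real_inner_comm v u]
  rw [c1, c2, c3, c4, c5, c6, c7, c8, d1, d2, d3]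
  ring

lemma ident1 (hF : Sym4 F) (α : ℝ) (x y z t : EuclideanSpace ℝ ι) :
    mform4α F α (x + y) (x + y) (z - t) (z - t) +
      mform4α F α (x - y) (x - y) (z + t) (z + t) =
      2 * (mform4α F α x x z z + mform4α F α y y z z + mform4α F α x x t t +
        mform4α F α y y t t) - 8 * mform4α F α x y z t := by
  have a1 : mform4 F y x z z = mform4 F x y z z := ms12 hF x y z z
  have a2 : mform4 F y x z t = mform4 F x y z t := ms12 hF x y z t
  have a3 : mform4 F y x t z = mform4 F x y t z := ms12 hF x y t z
  have a4 : mform4 F y x t t = mform4 F x y t t := ms12 hF x y t t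
  have b1 : mform4 F x x t z = mform4 F x x z t := ms34 hF x x z t
  have b2 : mform4 F x y t z = mform4 F x y z t := ms34 hF x y z t
  have b3 : mform4 F y y t z = mform4 F y y z t := ms34 hF y y z t
  unfold mform4α
  simp only [sub_eq_add_neg, mform4_add1, mform4_add2, mform4_add3, mform4_add4,
    mform4_neg1, mform4_neg2, mform4_neg3, mform4_neg4,
    inner_add_left, inner_add_right, inner_neg_left, inner_neg_right]
  rw [real_inner_comm y x, real_inner_comm t z]
  rw [a1, a2, a3, a4, b1, b2, b3]
  ring

end ident

section bound
variable {ι : Type*} [Fintype ι] {F : ι → ι → ι → ι → ℝ}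

lemma pair_le (hF : Sym4 F) {α : ℝ} (hα : 3 * frobNorm4 F ≤ α)
    (u v : EuclideanSpace ℝ ι) :
    2 * mform4α F α u u v v ≤ mform4α F α u u u u + mform4α F α v v v v := by
  have h := mform4α_diag_nonneg F α hα (u + v) (u - v)
  rw [ident2 hF] at h
  linarith

lemma quad_le (hF : Sym4 F) {α : ℝ} (hα : 3 * frobNorm4 F ≤ α)
    (x y z t : EuclideanSpace ℝ ι) :
    8 * mform4α F α x y z t ≤ 2 * (mform4α F α x x x x + mform4α F α y y y y +
      mform4α F α z z z z + mform4α F α t t t t) := by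
  have h1 := mform4α_diag_nonneg F α hα (x + y) (z - t)
  have h2 := mform4α_diag_nonneg F α hα (x - y) (z + t)
  have e := ident1 hF α x y z t
  have p1 := pair_le hF hα x z
  have p2 := pair_le hF hα y z
  have p3 := pair_le hF hα x t
  have p4 := pair_le hF hα y t
  linarith

end bound

section assign
variable {n₁ n₂ : ℕ}

lemma assign_nonempty (h₁ : 0 < n₁) (h₂ : n₁ ≤ n₂) : (AssignSet n₁ n₂).Nonempty := by
  refine ⟨(WithLp.toLp 2 (fun p : Fin n₁ × Fin n₂ => if (p.1 : ℕ) = (p.2 : ℕ) then (1:ℝ) else 0) :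
    EuclideanSpace ℝ (Fin n₁ × Fin n₂)), ?_, ?_, ?_⟩
  · intro p
    by_cases h : (p.1 : ℕ) = (p.2 : ℕ) <;> simp [h]
  · intro i
    have hiff : ∀ j : Fin n₂, ((i : ℕ) = (j : ℕ)) ↔ (j = Fin.castLE h₂ i) := by
      intro j; rw [Fin.ext_iff]; simp [Fin.coe_castLE, eq_comm]
    simp only [hiff]
    rw [Finset.sum_ite_eq' Finset.univ (Fin.castLE h₂ i) fun _ => (1 : ℝ)]
    simp
  · intro j
    have : (∑ i : Fin n₁, ((fun p : Fin n₁ × Fin n₂ =>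
        if (p.1 : ℕ) = (p.2 : ℕ) then (1:ℝ) else 0) (i, j)))
        = ((Finset.univ.filter fun i : Fin n₁ => (i : ℕ) = (j : ℕ)).card : ℝ) := by
      rw [Finset.sum_boole]
    rw [this]
    have hcard : (Finset.univ.filter fun i : Fin n₁ => (i : ℕ) = (j : ℕ)).card ≤ 1 := by
      refine Finset.card_le_one.mpr fun a ha b hb => ?_
      simp only [Finset.mem_filter] at ha hb
      exact Fin.ext (ha.2.trans hb.2.symm)
    exact_mod_cast hcard

lemma assign_finite : (AssignSet n₁ n₂).Finite := by
  have hsub : AssignSet n₁ n₂ ⊆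
      (WithLp.toLp 2 '' (Set.univ.pi fun _ : Fin n₁ × Fin n₂ => ({0, 1} : Set ℝ)) :
        Set (EuclideanSpace ℝ (Fin n₁ × Fin n₂))) := by
    intro x hx
    refine ⟨WithLp.ofLp x, fun p _ => ?_, rfl⟩
    rcases hx.1 p with h | h <;> simp [h]
  exact ((Set.Finite.pi fun _ => (Set.finite_singleton _).insert _).image _).subset hsub

lemma assign_inner_self {x : EuclideanSpace ℝ (Fin n₁ × Fin n₂)}
    (hx : x ∈ AssignSet n₁ n₂) : (inner ℝ x x : ℝ) = (n₁ : ℝ) := by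
  rw [inner_euc]
  have e1 : ∑ p : Fin n₁ × Fin n₂, x p * x p = ∑ p : Fin n₁ × Fin n₂, x p :=
    Finset.sum_congr rfl fun p _ => by rcases hx.1 p with h | h <;> rw [h] <;> ring
  rw [e1, Fintype.sum_prod_type]
  rw [Finset.sum_congr rfl fun i _ => hx.2.1 i]
  simp

lemma assign_diag {F : Fin n₁ × Fin n₂ → Fin n₁ × Fin n₂ → Fin n₁ × Fin n₂ →
      Fin n₁ × Fin n₂ → ℝ} {α : ℝ} {x : EuclideanSpace ℝ (Fin n₁ × Fin n₂)}
    (hx : x ∈ AssignSet n₁ n₂) :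
    mform4α F α x x x x = mform4 F x x x x + α * (n₁ : ℝ) ^ 2 := by
  unfold mform4α
  rw [assign_inner_self hx]
  ring

end assign

/-- For `α ≥ 3 ‖F‖₂`, maximizing the modified multilinear form `F⁴_α` over quadruples of
assignment vectors is the same as maximizing it on the diagonal, which is maximizing
`S⁴(x) + α n₁²` over assignment vectors. -/
theorem stmt_17 {n₁ n₂ : ℕ} (h₁ : 0 < n₁) (h₂ : n₁ ≤ n₂)
    (F : Fin n₁ × Fin n₂ → Fin n₁ × Fin n₂ → Fin n₁ × Fin n₂ → Fin n₁ × Fin n₂ → ℝ)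
    (hF : Sym4 F) (α : ℝ) (hα : 3 * frobNorm4 F ≤ α) :
    sSup {r : ℝ | ∃ x ∈ AssignSet n₁ n₂, ∃ y ∈ AssignSet n₁ n₂,
          ∃ z ∈ AssignSet n₁ n₂, ∃ t ∈ AssignSet n₁ n₂, r = mform4α F α x y z t} =
        sSup {r : ℝ | ∃ x ∈ AssignSet n₁ n₂, r = mform4α F α x x x x} ∧
      sSup {r : ℝ | ∃ x ∈ AssignSet n₁ n₂, r = mform4α F α x x x x} =
        sSup {r : ℝ | ∃ x ∈ AssignSet n₁ n₂,
          r = mform4 F x x x x + α * (n₁ : ℝ) ^ 2} := by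
  have hfin : (AssignSet n₁ n₂).Finite := assign_finite
  obtain ⟨x₀, hx₀⟩ := assign_nonempty h₁ h₂
  set S1 := {r : ℝ | ∃ x ∈ AssignSet n₁ n₂, r = mform4α F α x x x x} with hS1def
  set S4 := {r : ℝ | ∃ x ∈ AssignSet n₁ n₂, ∃ y ∈ AssignSet n₁ n₂,
      ∃ z ∈ AssignSet n₁ n₂, ∃ t ∈ AssignSet n₁ n₂, r = mform4α F α x y z t} with hS4def
  have hS1img : S1 = (fun x => mform4α F α x x x x) '' AssignSet n₁ n₂ := by
    ext r; simp [hS1def, eq_comm]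
  have hS1fin : S1.Finite := by rw [hS1img]; exact hfin.image _
  have hS1ne : S1.Nonempty := ⟨mform4α F α x₀ x₀ x₀ x₀, x₀, hx₀, rfl⟩
  have hS1bdd : BddAbove S1 := hS1fin.bddAbove
  have hS4img : S4 = (fun q : EuclideanSpace ℝ (Fin n₁ × Fin n₂) ×
      EuclideanSpace ℝ (Fin n₁ × Fin n₂) × EuclideanSpace ℝ (Fin n₁ × Fin n₂) ×
      EuclideanSpace ℝ (Fin n₁ × Fin n₂) => mform4α F α q.1 q.2.1 q.2.2.1 q.2.2.2) ''
      (AssignSet n₁ n₂ ×ˢ AssignSet n₁ n₂ ×ˢ AssignSet n₁ n₂ ×ˢ AssignSet n₁ n₂) := by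
    ext r
    constructor
    · rintro ⟨x, hx, y, hy, z, hz, t, ht, rfl⟩
      exact ⟨(x, y, z, t), ⟨hx, hy, hz, ht⟩, rfl⟩
    · rintro ⟨⟨x, y, z, t⟩, ⟨hx, hy, hz, ht⟩, rfl⟩
      exact ⟨x, hx, y, hy, z, hz, t, ht, rfl⟩
  have hS4fin : S4.Finite := by
    rw [hS4img]; exact ((hfin.prod (hfin.prod (hfin.prod hfin))).image _)
  have hS4ne : S4.Nonempty := ⟨mform4α F α x₀ x₀ x₀ x₀, x₀, hx₀, x₀, hx₀, x₀, hx₀, x₀, hx₀, rfl⟩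
  have hS4bdd : BddAbove S4 := hS4fin.bddAbove
  constructor
  · apply le_antisymm
    · apply csSup_le hS4ne
      rintro r ⟨x, hx, y, hy, z, hz, t, ht, rfl⟩
      have hb := quad_le hF hα x y z t
      have e1 : mform4α F α x x x x ≤ sSup S1 := le_csSup hS1bdd ⟨x, hx, rfl⟩
      have e2 : mform4α F α y y y y ≤ sSup S1 := le_csSup hS1bdd ⟨y, hy, rfl⟩
      have e3 : mform4α F α z z z z ≤ sSup S1 := le_csSup hS1bdd ⟨z, hz, rfl⟩
      have e4 : mform4α F α t t t t ≤ sSup S1 := le_csSup hS1bdd ⟨t, ht, rfl⟩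
      linarith
    · refine csSup_le_csSup hS4bdd hS1ne fun r hr => ?_
      obtain ⟨x, hx, hr⟩ := hr
      exact ⟨x, hx, x, hx, x, hx, x, hx, hr⟩
  · congr 1
    ext r
    constructor
    · rintro ⟨x, hx, rfl⟩
      exact ⟨x, hx, assign_diag hx⟩
    · rintro ⟨x, hx, rfl⟩
      exact ⟨x, hx, (assign_diag hx).symm⟩
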